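/- Let ε > 0, m ∈ ℝ, s > 0, and let g ~ N(m, s²). Then E[max(ε − |g|, 0)] = ε·(Φ((ε−m)/s) − Φ((−ε−m)/s)) − s·(2φ(−m/s) − φ((ε−m)/s) − φ((−ε−m)/s)) + m·(2Φ(−m/s) − Φ((ε−m)/s) − Φ((−ε−m)/s)), where φ and Φ are the standard normal pdf and cdf. -/

import Mathlib

open ProbabilityTheory MeasureTheory

noncomputable def stdNormalPDF (x : ℝ) : ℝ :=
  Real.exp (-(x ^ 2) / 2) / Real.sqrt (2 * Real.pi)

noncomputable def stdNormalCDF (x : ℝ) : ℝ :=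
  ∫ t in Set.Iic x, stdNormalPDF t

open Real
open scoped NNReal ENNReal

lemma pdf_eq : gaussianPDFReal 0 1 = stdNormalPDF := by
  funext x
  simp [gaussianPDFReal, stdNormalPDF]
  field_simp

lemma integrable_std : Integrable stdNormalPDF := by
  have h := (integrable_exp_neg_mul_sq (by norm_num : (0:ℝ) < 1/2)).mul_const
    (Real.sqrt (2*Real.pi))⁻¹
  refine h.congr ?_
  filter_upwards with x
  simp only [stdNormalPDF, div_eq_mul_inv]
  ring_nf

lemma stdpdf_cont : Continuous stdNormalPDF := by
  unfold stdNormalPDF; fun_prop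

lemma hasDeriv_negpdf (x : ℝ) : HasDerivAt (fun y => -stdNormalPDF y) (x * stdNormalPDF x) x := by
  have h1 : HasDerivAt (fun y : ℝ => -(y^2)/2) (-x) x := by
    have := ((hasDerivAt_pow 2 x).neg).div_const 2
    exact this.congr_deriv (by ring)
  have h2 := (h1.exp.div_const (Real.sqrt (2*Real.pi))).neg
  refine h2.congr_deriv ?_
  simp [stdNormalPDF]
  ring

lemma L1 (a b : ℝ) : ∫ x in a..b, stdNormalPDF x = stdNormalCDF b - stdNormalCDF a := by
  rw [stdNormalCDF, stdNormalCDF, intervalIntegral.integral_Iic_sub_Iic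
    integrable_std.integrableOn integrable_std.integrableOn]

lemma L2 (a b : ℝ) : ∫ x in a..b, x * stdNormalPDF x = stdNormalPDF a - stdNormalPDF b := by
  have := intervalIntegral.integral_eq_sub_of_hasDerivAt
    (f := fun y => -stdNormalPDF y) (f' := fun x => x * stdNormalPDF x)
    (a := a) (b := b) (fun x _ => hasDeriv_negpdf x)
    ((continuous_id.mul stdpdf_cont).intervalIntegrable a b)
  rw [this]; ring

theorem stmt_5 (ε m s : ℝ) (hε : 0 < ε) (hs : 0 < s) :
    ∫ g, max (ε - |g|) 0 ∂(gaussianReal m ⟨s ^ 2, sq_nonneg s⟩)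
      = ε * (stdNormalCDF ((ε - m) / s) - stdNormalCDF ((-ε - m) / s))
        - s * (2 * stdNormalPDF (-m / s) - stdNormalPDF ((ε - m) / s)
            - stdNormalPDF ((-ε - m) / s))
        + m * (2 * stdNormalCDF (-m / s) - stdNormalCDF ((ε - m) / s)
            - stdNormalCDF ((-ε - m) / s)) := by
  have hfc : Continuous (fun g : ℝ => max (ε - |g|) 0) :=
    (continuous_const.sub continuous_abs).max continuous_const
  set v : ℝ≥0 := ⟨s ^ 2, sq_nonneg s⟩ with hv
  have hmap1 : (gaussianReal 0 1).map (s * ·) = gaussianReal 0 v := by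
    rw [gaussianReal_map_const_mul s]
    congr 1 <;> simp [hv] <;> rfl
  have hmap2 : (gaussianReal 0 v).map (· + m) = gaussianReal m v := by
    rw [gaussianReal_map_add_const m, zero_add]
  have step1 : ∫ g, max (ε - |g|) 0 ∂(gaussianReal m v)
      = ∫ x, max (ε - |s * x + m|) 0 ∂(gaussianReal 0 1) := by
    have hfc2 : Continuous (fun x : ℝ => max (ε - |x + m|) 0) := by fun_prop
    rw [← hmap2, integral_map (measurable_add_const m).aemeasurable
      hfc.aestronglyMeasurable, ← hmap1, integral_map (measurable_const_mul s).aemeasurable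
      hfc2.aestronglyMeasurable]
  have step2 : ∫ x, max (ε - |s * x + m|) 0 ∂(gaussianReal 0 1)
      = ∫ x, stdNormalPDF x * max (ε - |s * x + m|) 0 := by
    rw [gaussianReal_of_var_ne_zero 0 one_ne_zero]
    have hd : gaussianPDF 0 1 = fun x => ((gaussianPDFReal 0 1 x).toNNReal : ℝ≥0∞) := rfl
    rw [hd, integral_withDensity_eq_integral_smul
      ((measurable_gaussianPDFReal 0 1).real_toNNReal)]
    congr 1; funext x
    rw [NNReal.smul_def, smul_eq_mul, Real.coe_toNNReal _ (gaussianPDFReal_nonneg 0 1 x), pdf_eq]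
  set A := (ε - m) / s with hA
  set B := (-ε - m) / s with hB
  set C := -m / s with hC
  have hsA : s * A = ε - m := by rw [hA]; field_simp
  have hsB : s * B = -ε - m := by rw [hB]; field_simp
  have hsC : s * C = -m := by rw [hC]; field_simp
  have hBC : B ≤ C := (div_le_div_iff_of_pos_right hs).mpr (by linarith)
  have hCA : C ≤ A := (div_le_div_iff_of_pos_right hs).mpr (by linarith)
  have hBA : B ≤ A := hBC.trans hCA
  have key : ∀ x ∉ Set.Ioc B A, stdNormalPDF x * max (ε - |s * x + m|) 0 = 0 := by
    intro x hx
    rw [Set.mem_Ioc, not_and_or, not_lt, not_le] at hx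
    have habs : ε ≤ |s * x + m| := by
      rcases hx with h | h
      · have : s * x ≤ s * B := by nlinarith
        rw [hsB] at this
        calc ε ≤ -(s * x + m) := by linarith
        _ ≤ |s * x + m| := neg_le_abs _
      · have : s * A ≤ s * x := by nlinarith
        rw [hsA] at this
        calc ε ≤ s * x + m := by linarith
        _ ≤ |s * x + m| := le_abs_self _
    rw [max_eq_right (by linarith)]
    ring
  have hint : ∀ a b : ℝ, IntervalIntegrable
      (fun x => stdNormalPDF x * max (ε - |s * x + m|) 0) volume a b := by
    intro a b
    exact (stdpdf_cont.mul (by fun_prop)).intervalIntegrable a b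
  have step3 : ∫ x, stdNormalPDF x * max (ε - |s * x + m|) 0
      = (∫ x in B..C, stdNormalPDF x * max (ε - |s * x + m|) 0)
        + ∫ x in C..A, stdNormalPDF x * max (ε - |s * x + m|) 0 := by
    rw [← setIntegral_eq_integral_of_forall_compl_eq_zero key,
      ← intervalIntegral.integral_of_le hBA,
      ← intervalIntegral.integral_add_adjacent_intervals (hint B C) (hint C A)]
  have e1 : ∫ x in B..C, stdNormalPDF x * max (ε - |s * x + m|) 0
      = ∫ x in B..C, ((ε + m) * stdNormalPDF x + s * (x * stdNormalPDF x)) := by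
    apply intervalIntegral.integral_congr
    intro x hx
    rw [Set.uIcc_of_le hBC, Set.mem_Icc] at hx
    dsimp only
    have h1 : s * B ≤ s * x := by nlinarith
    have h2 : s * x ≤ s * C := by nlinarith
    rw [hsB] at h1; rw [hsC] at h2
    rw [abs_of_nonpos (by linarith), max_eq_left (by linarith)]
    ring
  have e2 : ∫ x in C..A, stdNormalPDF x * max (ε - |s * x + m|) 0
      = ∫ x in C..A, ((ε - m) * stdNormalPDF x - s * (x * stdNormalPDF x)) := by
    apply intervalIntegral.integral_congr
    intro x hx
    rw [Set.uIcc_of_le hCA, Set.mem_Icc] at hx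
    dsimp only
    have h1 : s * C ≤ s * x := by nlinarith
    have h2 : s * x ≤ s * A := by nlinarith
    rw [hsC] at h1; rw [hsA] at h2
    rw [abs_of_nonneg (by linarith), max_eq_left (by linarith)]
    ring
  have i1 : IntervalIntegrable (fun x => (ε + m) * stdNormalPDF x) volume B C :=
    ((continuous_const.mul stdpdf_cont).intervalIntegrable B C)
  have i2 : IntervalIntegrable (fun x => s * (x * stdNormalPDF x)) volume B C :=
    ((continuous_const.mul (continuous_id.mul stdpdf_cont)).intervalIntegrable B C)
  have i3 : IntervalIntegrable (fun x => (ε - m) * stdNormalPDF x) volume C A :=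
    ((continuous_const.mul stdpdf_cont).intervalIntegrable C A)
  have i4 : IntervalIntegrable (fun x => s * (x * stdNormalPDF x)) volume C A :=
    ((continuous_const.mul (continuous_id.mul stdpdf_cont)).intervalIntegrable C A)
  rw [step1, step2, step3, e1, e2,
    intervalIntegral.integral_add i1 i2, intervalIntegral.integral_sub i3 i4,
    intervalIntegral.integral_const_mul, intervalIntegral.integral_const_mul,
    intervalIntegral.integral_const_mul, intervalIntegral.integral_const_mul,
    L1, L1, L2, L2]
  ring
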